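/- If f ∈ F_{A,B}(q), then ∑_{n=1}^{q} f(n) = 0. -/

import Mathlib

open Finset hiding sum_eq_zero

/-- `f` belongs to the class `F_{A,B}(q)`: it is bounded by `A`, periodic with period `q`,
and satisfies `∑_{n=1}^{q} |∑_{k=1}^{K} f(n+k)|² ≤ B·q·K` for every natural `K ≥ 1`. -/
def MemF (A B : ℝ) (q : ℕ) (f : ℤ → ℂ) : Prop :=
  (∀ n : ℤ, ‖f n‖ ≤ A) ∧
  (∀ n : ℤ, f (n + (q : ℤ)) = f n) ∧
  (∀ K : ℕ, 1 ≤ K →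
    ∑ n ∈ Finset.Icc (1 : ℤ) (q : ℤ),
      ‖∑ k ∈ Finset.Icc (1 : ℤ) (K : ℤ), f (n + k)‖ ^ 2 ≤ B * q * K)

lemma sum_Ioc_shift (g : ℤ → ℂ) (a b c : ℤ) :
    ∑ k ∈ Finset.Ioc (a + c) (b + c), g k = ∑ k ∈ Finset.Ioc a b, g (k + c) := by
  rw [← Finset.map_add_right_Ioc, Finset.sum_map]
  simp [addRightEmbedding]

lemma sum_Ioc_split (g : ℤ → ℂ) {a b c : ℤ} (h1 : a ≤ b) (h2 : b ≤ c) :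
    ∑ k ∈ Finset.Ioc a c, g k = ∑ k ∈ Finset.Ioc a b, g k + ∑ k ∈ Finset.Ioc b c, g k := by
  rw [← Finset.Ioc_union_Ioc_eq_Ioc h1 h2, Finset.sum_union]
  rw [Finset.disjoint_left]
  intro x hx hx'
  simp [Finset.mem_Ioc] at hx hx'
  omega

/-- If `f ∈ F_{A,B}(q)`, then `∑_{n=1}^{q} f(n) = 0`. -/
theorem sum_eq_zero (A B : ℝ) (hA : 0 < A) (hB : 0 < B) (q : ℕ) (hq1 : 1 ≤ q)
    (f : ℤ → ℂ) (hf : MemF A B q f) :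
    ∑ n ∈ Finset.Icc (1 : ℤ) (q : ℤ), f n = 0 := by
  obtain ⟨hbd, hper, hsum⟩ := hf
  have hq0 : (0:ℤ) < (q:ℤ) := by exact_mod_cast hq1
  have hqpos : (0:ℝ) < q := by exact_mod_cast hq1
  have hIccIoc : ∀ N : ℤ, Finset.Icc (1:ℤ) N = Finset.Ioc 0 N := by
    intro N; ext x; simp [Finset.mem_Icc, Finset.mem_Ioc]; omega
  set S := ∑ n ∈ Finset.Icc (1:ℤ) (q:ℤ), f n with hS
  have hshift : ∀ t : ℤ, ∑ k ∈ Finset.Ioc (0:ℤ) (q:ℤ), f (k + t) = S := by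
    have key : ∀ t : ℤ, ∑ k ∈ Finset.Ioc (0:ℤ) (q:ℤ), f (k + (t+1)) =
        ∑ k ∈ Finset.Ioc (0:ℤ) (q:ℤ), f (k + t) := by
      intro t
      have h1 : ∑ k ∈ Finset.Ioc (0:ℤ) (q:ℤ), f (k + (t+1)) =
          ∑ k ∈ Finset.Ioc (1:ℤ) ((q:ℤ)+1), f (k + t) := by
        have h := sum_Ioc_shift (fun k => f (k + t)) 0 (q:ℤ) 1
        simp only [zero_add] at h
        rw [h]
        exact Finset.sum_congr rfl (fun k _ => by ring_nf)
      rw [h1]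
      have h2 : ∑ k ∈ Finset.Ioc (0:ℤ) ((q:ℤ)+1), f (k + t)
          = ∑ k ∈ Finset.Ioc (0:ℤ) (1:ℤ), f (k + t)
            + ∑ k ∈ Finset.Ioc (1:ℤ) ((q:ℤ)+1), f (k + t) :=
        sum_Ioc_split _ (by omega) (by omega)
      have h3 : ∑ k ∈ Finset.Ioc (0:ℤ) ((q:ℤ)+1), f (k + t)
          = ∑ k ∈ Finset.Ioc (0:ℤ) (q:ℤ), f (k + t)
            + ∑ k ∈ Finset.Ioc (q:ℤ) ((q:ℤ)+1), f (k + t) :=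
        sum_Ioc_split _ (by omega) (by omega)
      have e1 : Finset.Ioc (0:ℤ) (1:ℤ) = {1} := by ext x; simp [Finset.mem_Ioc]; omega
      have e2 : Finset.Ioc (q:ℤ) ((q:ℤ)+1) = {(q:ℤ)+1} := by
        ext x; simp [Finset.mem_Ioc]; omega
      have e3 : f ((q:ℤ) + 1 + t) = f (1 + t) := by
        have := hper (1 + t); rw [← this]; ring_nf
      rw [e1, Finset.sum_singleton] at h2
      rw [e2, Finset.sum_singleton] at h3
      have h4 := h2.symm.trans h3
      rw [e3] at h4
      linear_combination h4
    intro t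
    induction t using Int.induction_on with
    | zero => simp [hS, hIccIoc]
    | succ t ih => rw [key t]; exact ih
    | pred t ih =>
      rw [← key (-(t:ℤ) - 1), show (-(t:ℤ) - 1 + 1) = -(t:ℤ) from by ring]
      exact ih
  have hblocks : ∀ (n : ℤ) (m : ℕ),
      ∑ k ∈ Finset.Ioc (0:ℤ) ((m:ℤ) * q), f (n + k) = (m : ℂ) * S := by
    intro n m
    induction m with
    | zero => simp
    | succ m ih =>
      have hsplit : ∑ k ∈ Finset.Ioc (0:ℤ) (((m:ℤ)+1) * q), f (n + k)
          = ∑ k ∈ Finset.Ioc (0:ℤ) ((m:ℤ) * q), f (n + k)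
            + ∑ k ∈ Finset.Ioc ((m:ℤ)*q) ((q:ℤ) + (m:ℤ)*q), f (n + k) := by
        rw [show (((m:ℤ)+1) * q) = (q:ℤ) + (m:ℤ)*q by ring]
        exact sum_Ioc_split _ (by positivity) (by omega)
      have hblock : ∑ k ∈ Finset.Ioc ((m:ℤ)*q) ((q:ℤ) + (m:ℤ)*q), f (n + k) = S := by
        have h := sum_Ioc_shift (fun k => f (n + k)) 0 (q:ℤ) ((m:ℤ)*q)
        simp only [zero_add] at h
        rw [h, ← hshift (n + (m:ℤ)*q)]
        exact Finset.sum_congr rfl (fun k _ => by ring_nf)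
      push_cast
      rw [hsplit, ih, hblock]; ring
  have hest : ∀ m : ℕ, 1 ≤ m → (m:ℝ) * (‖S‖)^2 ≤ B * q := by
    intro m hm
    have hK : 1 ≤ m * q := Nat.one_le_iff_ne_zero.mpr (by positivity)
    have h := hsum (m * q) hK
    have hcast : ((m * q : ℕ) : ℤ) = (m:ℤ) * q := by push_cast; ring
    rw [hcast] at h
    have hL : ∀ n ∈ Finset.Icc (1:ℤ) (q:ℤ),
        ‖∑ k ∈ Finset.Icc (1:ℤ) ((m:ℤ)*q), f (n + k)‖^2
          = (m:ℝ)^2 * (‖S‖)^2 := by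
      intro n _
      rw [hIccIoc, hblocks n m, norm_mul]
      simp [mul_pow]
    rw [Finset.sum_congr rfl hL, Finset.sum_const] at h
    have hcard : (Finset.Icc (1:ℤ) (q:ℤ)).card = q := by
      rw [Int.card_Icc]; omega
    rw [hcard, nsmul_eq_mul] at h
    push_cast at h
    have hmpos : (0:ℝ) < m := by exact_mod_cast hm
    have h1 : (m:ℝ)^2 * (‖S‖)^2 ≤ B * q * m := by
      have h2 : ((m:ℝ)^2 * (‖S‖)^2) * q ≤ (B * q * m) * q := by
        linear_combination h
      exact le_of_mul_le_mul_right h2 hqpos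
    have h3 : (m:ℝ) * ((m:ℝ) * (‖S‖)^2) ≤ (m:ℝ) * (B * q) := by
      linear_combination h1
    exact le_of_mul_le_mul_left h3 hmpos
  have habs : ‖S‖ = 0 := by
    by_contra hne
    have hpos : 0 < (‖S‖)^2 :=
      pow_pos ((norm_nonneg S).lt_of_ne (Ne.symm hne)) 2
    obtain ⟨m, hm⟩ := exists_nat_gt (B * q / (‖S‖)^2)
    have hm1 : 1 ≤ m := by
      by_contra hc
      interval_cases m
      · simp at hm
        have := div_nonneg (le_of_lt (mul_pos hB hqpos)) hpos.le
        linarith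
    have := hest m hm1
    rw [div_lt_iff₀ hpos] at hm
    linarith
  simpa using norm_eq_zero.mp habs
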